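/- Define |t_N(k)|² = 1/(1 + |S|² U_{N-1}(x)²) with x = Re(ε̄R), |R|²−|S|²=1. If |x| ≤ 1, then |t_N(k)|² ≥ (1 − x²)/(1 + |S|² − x²). -/

import Mathlib

open Complex Polynomial

lemma key_U_bound (n : ℤ) (x : ℝ) (hx1 : |x| ≤ 1) :
    (1 - x ^ 2) * ((Polynomial.Chebyshev.U ℝ n).eval x) ^ 2 ≤ 1 := by
  obtain ⟨θ, hθ⟩ : ∃ θ : ℝ, Real.cos θ = x :=
    ⟨Real.arccos x, Real.cos_arccos (abs_le.mp hx1).1 (abs_le.mp hx1).2⟩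
  have h := Polynomial.Chebyshev.U_real_cos θ n
  rw [hθ] at h
  have h2 : (1 - x ^ 2) * ((Polynomial.Chebyshev.U ℝ n).eval x) ^ 2
      = (Real.sin ((n + 1) * θ)) ^ 2 := by
    rw [← h, ← hθ]
    have := Real.sin_sq_add_cos_sq θ
    ring_nf
    nlinarith [Real.sin_sq_add_cos_sq θ]
  rw [h2]
  nlinarith [Real.sin_sq_le_one ((n + 1 : ℝ) * θ)]

/-- In-band lower bound for the serial transmission probability. -/
theorem serial_transmission_lower_bound_band (R S : ℂ)
    (hRS : ‖R‖ ^ 2 - ‖S‖ ^ 2 = 1)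
    (k ℓ : ℝ) (ε : ℂ) (hε : ε = Complex.exp (Complex.I * k * ℓ))
    (N : ℕ) (hN : 1 ≤ N)
    (x : ℝ) (hx : x = ((starRingEnd ℂ) ε * R).re) (hx1 : |x| ≤ 1) :
    1 / (1 + ‖S‖ ^ 2 * ((Polynomial.Chebyshev.U ℝ ((N : ℤ) - 1)).eval x) ^ 2) ≥
      (1 - x ^ 2) / (1 + ‖S‖ ^ 2 - x ^ 2) := by
  set s := ‖S‖ ^ 2 with hs
  have hs0 : 0 ≤ s := sq_nonneg _
  set u := (Polynomial.Chebyshev.U ℝ ((N : ℤ) - 1)).eval x with hu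
  have hx2 : x ^ 2 ≤ 1 := by nlinarith [abs_le.mp hx1, _root_.sq_abs x]
  have hkey : (1 - x ^ 2) * u ^ 2 ≤ 1 := key_U_bound _ x hx1
  have hden1 : 0 < 1 + s * u ^ 2 := by nlinarith [sq_nonneg u]
  rcases eq_or_lt_of_le (by nlinarith : (0:ℝ) ≤ 1 + s - x ^ 2) with h0 | h0
  · rw [← h0, div_zero]
    positivity
  · rw [ge_iff_le, div_le_div_iff₀ h0 hden1]
    nlinarith [mul_le_of_le_one_right hs0 hkey]
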